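/- Let (D, ā) be a pointed database and 1 ≤ ℓ < k. If (D', b̄) is a pointed database of treewidth (ℓ, k) and there is a homomorphism h from D' to D with h(b̄) = ā, then there is a homomorphism g from D' to the (ℓ,k)-unraveling D≈_{ā,ℓ,k} of D up to ā with g(b̄) = ā. -/

import Mathlib

set_option autoImplicit false

attribute [local instance] Classical.propDecidable

/-! ### Interpretations, databases, homomorphisms -/

structure Interp (C R A : Type) where
  cn : C → A → Prop
  rn : R → A → A → Prop

namespace Interp

variable {C R A : Type}

/-- The active domain of an interpretation/database. -/
def adom (I : Interp C R A) : Set A :=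
  {a | (∃ c, I.cn c a) ∨ (∃ r b, I.rn r a b) ∨ (∃ r b, I.rn r b a)}

/-- An interpretation has finitely many facts (this is what makes it a database). -/
def FiniteFacts (I : Interp C R A) : Prop :=
  {p : C × A | I.cn p.1 p.2}.Finite ∧ {t : R × A × A | I.rn t.1 t.2.1 t.2.2}.Finite

/-- All facts use only symbols from the signature `(SC, SR)`. -/
def InSig (I : Interp C R A) (SC : Set C) (SR : Set R) : Prop :=
  (∀ c a, I.cn c a → c ∈ SC) ∧ (∀ r a b, I.rn r a b → r ∈ SR)

/-- Restriction of an interpretation to a set of elements. -/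
def restrict (I : Interp C R A) (s : Set A) : Interp C R A where
  cn c a := a ∈ s ∧ I.cn c a
  rn r a b := a ∈ s ∧ b ∈ s ∧ I.rn r a b

/-- Semantics of (possibly inverse) roles: `Sum.inl r` is `r`, `Sum.inr r` is `r⁻`. -/
def roleE (I : Interp C R A) : R ⊕ R → A → A → Prop
  | .inl r, a, b => I.rn r a b
  | .inr r, a, b => I.rn r b a

/-- The undirected graph underlying an interpretation. -/
def graphOf (I : Interp C R A) : SimpleGraph A where
  Adj a b := a ≠ b ∧ ∃ r, I.rn r a b ∨ I.rn r b a
  symm := ⟨by rintro a b ⟨hne, r, hr⟩; exact ⟨hne.symm, r, hr.symm⟩⟩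
  loopless := ⟨by rintro a ⟨hne, -⟩; exact hne rfl⟩

/-- A database/interpretation is a tree: the underlying graph is acyclic,
there are no self loops and no multi-edges (trees need not be connected). -/
def IsTree (I : Interp C R A) : Prop :=
  I.graphOf.IsAcyclic ∧ (∀ r a, ¬ I.rn r a a) ∧
    (∀ (ρ₁ ρ₂ : R ⊕ R) (a b : A), ρ₁ ≠ ρ₂ → I.roleE ρ₁ a b → ¬ I.roleE ρ₂ a b)

end Interp

/-- Homomorphisms between interpretations. -/
structure Hom {C R A B : Type} (I : Interp C R A) (J : Interp C R B) where
  toFun : A → B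
  map_cn : ∀ c a, I.cn c a → J.cn c (toFun a)
  map_rn : ∀ r a b, I.rn r a b → J.rn r (toFun a) (toFun b)

/-! ### Tree decompositions and treewidth -/

/-- An `(ℓ,k)`-tree decomposition of an interpretation: an undirected tree `(V,G)`
with bags of size at most `k`, pairwise overlaps of size at most `ℓ`, every active
element appearing in a nonempty connected set of bags, and every role edge
contained in some bag. -/
structure TreeDecomp {C R A : Type} (I : Interp C R A) (ℓ k : ℕ) where
  V : Type
  G : SimpleGraph V
  conn : G.Connected
  acyc : G.IsAcyclic
  bag : V → Set A
  cover : ∀ a ∈ I.adom, (G.induce {v | a ∈ bag v}).Connected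
  edges : ∀ r a b, I.rn r a b → ∃ v, a ∈ bag v ∧ b ∈ bag v
  bagFin : ∀ v, (bag v).Finite
  bagCard : ∀ v, (bag v).ncard ≤ k
  overlap : ∀ v w, v ≠ w → (bag v ∩ bag w).ncard ≤ ℓ

/-- `I` has treewidth `(ℓ,k)`. -/
def HasTW {C R A : Type} (I : Interp C R A) (ℓ k : ℕ) : Prop :=
  Nonempty (TreeDecomp I ℓ k)

/-! ### Conjunctive queries and UCQs -/

/-- A conjunctive query with `m` answer variables (`Fin m`) and quantified
variables `V`. -/
structure CQ (C R : Type) (m : ℕ) where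
  V : Type
  cnAtoms : Set (C × (Fin m ⊕ V))
  rnAtoms : Set (R × (Fin m ⊕ V) × (Fin m ⊕ V))

namespace CQ

variable {C R A : Type} {m : ℕ}

/-- `I ⊨ q(atup)`. -/
def Eval (q : CQ C R m) (I : Interp C R A) (atup : Fin m → A) : Prop :=
  ∃ h : Fin m ⊕ q.V → A, (∀ i, h (.inl i) = atup i) ∧
    (∀ p ∈ q.cnAtoms, I.cn p.1 (h p.2)) ∧
    (∀ t ∈ q.rnAtoms, I.rn t.1 (h t.2.1) (h t.2.2))

/-- The canonical database of a CQ (all variables as constants). -/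
def canon (q : CQ C R m) : Interp C R (Fin m ⊕ q.V) where
  cn c x := (c, x) ∈ q.cnAtoms
  rn r x y := (r, x, y) ∈ q.rnAtoms

/-- The treewidth of a CQ: the treewidth of its canonical database restricted to
the quantified variables (answer variables do not contribute). -/
def HasTWq (q : CQ C R m) (ℓ k : ℕ) : Prop :=
  HasTW (q.canon.restrict (Set.range Sum.inr)) ℓ k

end CQ

/-- A union of conjunctive queries, as an indexed family of CQs of the same arity. -/
structure UCQ (C R : Type) (m : ℕ) where
  ι : Type
  d : ι → CQ C R m

def UCQ.Eval {C R A : Type} {m : ℕ} (q : UCQ C R m) (I : Interp C R A)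
    (atup : Fin m → A) : Prop :=
  ∃ i, (q.d i).Eval I atup

/-! ### Certain answers (generic in the ontology semantics) -/

/-- `atup` is a certain answer on `D` for query semantics `Ev`, w.r.t. all
(nonempty) models satisfying `Mod`: under the standard-names-free reading,
models of `D` are interpretations together with a homomorphism from `D`. -/
def Certain {C R A : Type} {m : ℕ} (Mod : ∀ Δ : Type, Interp C R Δ → Prop)
    (D : Interp C R A) (Ev : ∀ Δ : Type, Interp C R Δ → (Fin m → Δ) → Prop)
    (atup : Fin m → A) : Prop :=
  ∀ (Δ : Type), Nonempty Δ → ∀ I : Interp C R Δ, Mod Δ I →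
    ∀ h : Hom D I, Ev Δ I (fun i => h.toFun (atup i))

/-- `D` is satisfiable w.r.t. the class of models described by `Mod`. -/
def Satisfiable {C R A : Type} (Mod : ∀ Δ : Type, Interp C R Δ → Prop)
    (D : Interp C R A) : Prop :=
  ∃ (Δ : Type) (_ : Nonempty Δ) (I : Interp C R Δ), Nonempty (Hom D I) ∧ Mod Δ I

/-! ### First-order logic (no equality, no constants) -/

inductive FO (C R : Type) : ℕ → Type
  | cn {n : ℕ} (c : C) (i : Fin n) : FO C R n
  | rn {n : ℕ} (r : R) (i j : Fin n) : FO C R n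
  | fls {n : ℕ} : FO C R n
  | imp {n : ℕ} (φ ψ : FO C R n) : FO C R n
  | all {n : ℕ} (φ : FO C R (n+1)) : FO C R n

def FO.Eval {C R A : Type} (I : Interp C R A) : {n : ℕ} → FO C R n → (Fin n → A) → Prop
  | _, .cn c i, v => I.cn c (v i)
  | _, .rn r i j, v => I.rn r (v i) (v j)
  | _, .fls, _ => False
  | _, .imp φ ψ, v => φ.Eval I v → ψ.Eval I v
  | _, .all φ, v => ∀ a, φ.Eval I (Fin.cons a v)

/-- `I` is a model of the FO ontology `O`. -/
def ModelsFO {C R A : Type} (I : Interp C R A) (O : Set (FO C R 0)) : Prop :=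
  ∀ φ ∈ O, φ.Eval I (fun i => i.elim0)

/-- `O ⊨ O'` for FO ontologies. -/
def FOEntails {C R : Type} (O O' : Set (FO C R 0)) : Prop :=
  ∀ (Δ : Type), Nonempty Δ → ∀ I : Interp C R Δ, ModelsFO I O → ModelsFO I O'

/-! ### Tuple-generating dependencies -/

/-- A TGD with `n` frontier variables, whose body and head are CQs with the
frontier variables as answer variables; `head = none` stands for `⊥`. -/
structure TGD (C R : Type) where
  n : ℕ
  body : CQ C R n
  head : Option (CQ C R n)

def TGD.Sat {C R A : Type} (t : TGD C R) (I : Interp C R A) : Prop :=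
  ∀ v : Fin t.n → A, t.body.Eval I v →
    match t.head with
    | some ψ => ψ.Eval I v
    | none => False

def ModelsTGDSet {C R A : Type} (I : Interp C R A) (O : Set (TGD C R)) : Prop :=
  ∀ t ∈ O, t.Sat I

/-! ### Description logic concepts -/

/-- `ELIU` concepts with ⊥, possibly disjunction and the universal role. -/
inductive ELIU (C R : Type) : Type
  | top
  | bot
  | cn (c : C)
  | inter (X Y : ELIU C R)
  | union (X Y : ELIU C R)
  | exR (ρ : R ⊕ R) (X : ELIU C R)
  | exU (X : ELIU C R)

namespace ELIU

variable {C R A : Type}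

def sem (I : Interp C R A) : ELIU C R → A → Prop
  | .top, _ => True
  | .bot, _ => False
  | .cn c, a => I.cn c a
  | .inter X Y, a => X.sem I a ∧ Y.sem I a
  | .union X Y, a => X.sem I a ∨ Y.sem I a
  | .exR ρ X, a => ∃ b, I.roleE ρ a b ∧ X.sem I b
  | .exU X, _ => ∃ b, X.sem I b

def uFree : ELIU C R → Prop
  | .top => True
  | .bot => True
  | .cn _ => True
  | .inter X Y => X.uFree ∧ Y.uFree
  | .union X Y => X.uFree ∧ Y.uFree
  | .exR _ X => X.uFree
  | .exU _ => False

def disjFree : ELIU C R → Prop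
  | .top => True
  | .bot => True
  | .cn _ => True
  | .inter X Y => X.disjFree ∧ Y.disjFree
  | .union _ _ => False
  | .exR _ X => X.disjFree
  | .exU X => X.disjFree

def botFree : ELIU C R → Prop
  | .top => True
  | .bot => False
  | .cn _ => True
  | .inter X Y => X.botFree ∧ Y.botFree
  | .union X Y => X.botFree ∧ Y.botFree
  | .exR _ X => X.botFree
  | .exU X => X.botFree

end ELIU

/-- A concept inclusion is an `ELI_⊥` CI (no disjunction, no universal role). -/
def ELIbotCI {C R : Type} (p : ELIU C R × ELIU C R) : Prop :=
  p.1.disjFree ∧ p.1.uFree ∧ p.2.disjFree ∧ p.2.uFree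

/-- A concept inclusion is an `ELI` CI. -/
def ELICI {C R : Type} (p : ELIU C R × ELIU C R) : Prop :=
  ELIbotCI p ∧ p.1.botFree ∧ p.2.botFree

def ModelsELIUOnt {C R A : Type} (I : Interp C R A)
    (T : Set (ELIU C R × ELIU C R)) : Prop :=
  ∀ p ∈ T, ∀ a, p.1.sem I a → p.2.sem I a

def EntailsELIU {C R : Type} (T T' : Set (ELIU C R × ELIU C R)) : Prop :=
  ∀ (Δ : Type), Nonempty Δ → ∀ I : Interp C R Δ, ModelsELIUOnt I T → ModelsELIUOnt I T'

/-- `ALCI` concepts. -/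
inductive ALCI (C R : Type) : Type
  | top
  | cn (c : C)
  | neg (X : ALCI C R)
  | inter (X Y : ALCI C R)
  | exR (ρ : R ⊕ R) (X : ALCI C R)

namespace ALCI

variable {C R A : Type}

def sem (I : Interp C R A) : ALCI C R → A → Prop
  | .top, _ => True
  | .cn c, a => I.cn c a
  | .neg X, a => ¬ X.sem I a
  | .inter X Y, a => X.sem I a ∧ Y.sem I a
  | .exR ρ X, a => ∃ b, I.roleE ρ a b ∧ X.sem I b

/-- `C ⊔ D` as an abbreviation. -/
def unionA (X Y : ALCI C R) : ALCI C R := .neg (.inter (.neg X) (.neg Y))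

/-- `∀r.C` as an abbreviation. -/
def allR (r : R) (X : ALCI C R) : ALCI C R := .neg (.exR (.inl r) (.neg X))

/-- `∃rⁿ.C` (n-fold nesting). -/
def exPow (r : R) : ℕ → ALCI C R → ALCI C R
  | 0, X => X
  | n+1, X => .exR (.inl r) (exPow r n X)

end ALCI

def ModelsALCIOnt {C R A : Type} (I : Interp C R A)
    (O : Set (ALCI C R × ALCI C R)) : Prop :=
  ∀ p ∈ O, ∀ a, p.1.sem I a → p.2.sem I a

def EntailsALCI {C R : Type} (O O' : Set (ALCI C R × ALCI C R)) : Prop :=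
  ∀ (Δ : Type), Nonempty Δ → ∀ I : Interp C R Δ, ModelsALCIOnt I O → ModelsALCIOnt I O'

/-- The set `O≈` of all `ELI^u_⊥` concept inclusions entailed by the ALCI
ontology `O`. -/
def ELIuApprox {C R : Type} (O : Set (ALCI C R × ALCI C R)) :
    Set (ELIU C R × ELIU C R) :=
  {p | p.1.disjFree ∧ p.2.disjFree ∧
    ∀ (Δ : Type), Nonempty Δ → ∀ I : Interp C R Δ, ModelsALCIOnt I O →
      ∀ a, p.1.sem I a → p.2.sem I a}

/-! ### bELIQs -/

/-- A bELIQ: either an ELIQ `C(x)` (unary) or a Boolean ELIQ `∃u.C`. -/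
inductive BELIQ (C R : Type) : Type
  | q1 (X : ELIU C R)
  | q0 (X : ELIU C R)

namespace BELIQ

variable {C R A : Type}

def arity : BELIQ C R → ℕ
  | .q1 _ => 1
  | .q0 _ => 0

/-- Well-formedness: the underlying concept is an `ELI` concept. -/
def wf : BELIQ C R → Prop
  | .q1 X => X.disjFree ∧ X.uFree ∧ X.botFree
  | .q0 X => X.disjFree ∧ X.uFree ∧ X.botFree

def Eval : (q : BELIQ C R) → Interp C R A → (Fin q.arity → A) → Prop
  | .q1 X, I, v => X.sem I (v ⟨0, Nat.zero_lt_one⟩)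
  | .q0 X, I, _ => ∃ a, X.sem I a

end BELIQ

/-! ### Tree unraveling -/

/-- Paths in a database, indexed by their tail. -/
inductive UPath {C R A : Type} (I : Interp C R A) : A → Type
  | nil (a : A) : UPath I a
  | cons {a : A} (p : UPath I a) (ρ : R ⊕ R) (b : A) (h : I.roleE ρ a b) : UPath I b

/-- The tree unraveling `D≈_S` of `D` at `S`: it contains all facts of `D|_S`,
the facts along paths, and the connecting facts between `S` and paths. -/
def treeUnravel {C R A : Type} (D : Interp C R A) (S : Set A) :
    Interp C R (A ⊕ (Σ a : A, UPath D a)) where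
  cn c x :=
    match x with
    | .inl a => a ∈ S ∧ D.cn c a
    | .inr p => D.cn c p.1
  rn r x y :=
    (∃ a b, a ∈ S ∧ b ∈ S ∧ D.rn r a b ∧ x = .inl a ∧ y = .inl b) ∨
    (∃ (a : A) (p : UPath D a) (b : A) (h : D.roleE (.inl r) a b),
        x = .inr ⟨a, p⟩ ∧ y = .inr ⟨b, p.cons (.inl r) b h⟩) ∨
    (∃ (a : A) (p : UPath D a) (b : A) (h : D.roleE (.inr r) a b),
        y = .inr ⟨a, p⟩ ∧ x = .inr ⟨b, p.cons (.inr r) b h⟩) ∨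
    (∃ (a b : A) (p : UPath D b), a ∈ S ∧ D.rn r a b ∧ x = .inl a ∧ y = .inr ⟨b, p⟩) ∨
    (∃ (a b : A) (p : UPath D b), a ∈ S ∧ D.rn r b a ∧ x = .inr ⟨b, p⟩ ∧ y = .inl a)

/-! ### (ℓ,k)-unraveling -/

/-- Admissibility of a bag `T` in an `(ℓ,k)`-sequence: `S ⊆ T ⊆ adom(D)` and
`|T \ S| ≤ k`. -/
def SeqOk {C R A : Type} (D : Interp C R A) (S : Set A) (k : ℕ) (T : Set A) : Prop :=
  S ⊆ T ∧ T ⊆ D.adom ∧ (T \ S).Finite ∧ (T \ S).ncard ≤ k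

/-- `(ℓ,k)`-sequences `S₀,O₀,S₁,…,Sₙ`, indexed by the last bag `Sₙ`. -/
inductive LKSeq {C R A : Type} (D : Interp C R A) (S : Set A) (ℓ k : ℕ) : Set A → Type
  | first (S₀ : Set A) (h : SeqOk D S k S₀) : LKSeq D S ℓ k S₀
  | step {T : Set A} (v : LKSeq D S ℓ k T) (O T' : Set A)
      (hO : S ⊆ O) (hOT : O ⊆ T ∩ T') (hOf : (O \ S).Finite)
      (hOl : (O \ S).ncard ≤ ℓ) (hT' : SeqOk D S k T') : LKSeq D S ℓ k T'

/-- Elements of the `(ℓ,k)`-unraveling: elements of `S` keep their names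
(`Sum.inl`), all other copies are identified by the sequence at which they are
introduced. -/
abbrev LKElem {C R A : Type} (D : Interp C R A) (S : Set A) (ℓ k : ℕ) : Type :=
  A ⊕ (Σ T : Set A, LKSeq D S ℓ k T × A)

/-- The copy `a_v` of `a` in the bag of the sequence `v`. -/
noncomputable def LKSeq.rep {C R A : Type} {D : Interp C R A} {S : Set A} {ℓ k : ℕ} :
    {T : Set A} → LKSeq D S ℓ k T → A → LKElem D S ℓ k
  | _, .first S₀ h, a =>
      if a ∈ S then Sum.inl a else Sum.inr ⟨S₀, (LKSeq.first S₀ h, a)⟩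
  | _, .step v O T' h1 h2 h3 h4 h5, a =>
      if a ∈ S then Sum.inl a
      else if a ∈ O then v.rep a
      else Sum.inr ⟨T', (LKSeq.step v O T' h1 h2 h3 h4 h5, a)⟩

/-- The `(ℓ,k)`-unraveling `D≈_{S,ℓ,k}` of `D` up to `S`. -/
noncomputable def unravelLK {C R A : Type} (D : Interp C R A) (S : Set A) (ℓ k : ℕ) :
    Interp C R (LKElem D S ℓ k) where
  cn c x := ∃ (T : Set A) (v : LKSeq D S ℓ k T) (a : A),
      a ∈ T ∧ x = v.rep a ∧ D.cn c a
  rn r x y := ∃ (T : Set A) (v : LKSeq D S ℓ k T) (a b : A),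
      a ∈ T ∧ b ∈ T ∧ x = v.rep a ∧ y = v.rep b ∧ D.rn r a b

/-- The uncopying map. -/
def uncopyLK {C R A : Type} {D : Interp C R A} {S : Set A} {ℓ k : ℕ} :
    LKElem D S ℓ k → A
  | .inl a => a
  | .inr x => x.2.2

/-- `x` is a copy of `a` in the `(ℓ,k)`-unraveling. -/
def IsCopyLK {C R A : Type} {D : Interp C R A} {S : Set A} {ℓ k : ℕ}
    (x : LKElem D S ℓ k) (a : A) : Prop :=
  ∃ (T : Set A) (v : LKSeq D S ℓ k T), a ∈ T ∧ x = v.rep a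

/-- The frontier-one `ℓ,k,ℓ',k'`-TGDs entailed by the ALCI ontology `O`. -/
def approxTGDs {C R : Type} (O : Set (ALCI C R × ALCI C R)) (ℓ k ℓ' k' : ℕ) :
    Set (TGD C R) :=
  {t | t.n ≤ 1 ∧ HasTW t.body.canon ℓ k ∧
       (∀ ψ, t.head = some ψ → HasTW ψ.canon ℓ' k') ∧
       ∀ (Δ : Type), Nonempty Δ → ∀ I : Interp C R Δ, ModelsALCIOnt I O → t.Sat I}

/-! ### The disjunct operation f and the approximation set E_O -/

def fDisj {C R : Type} : ELIU C R → Set (ELIU C R)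
  | .top => {ELIU.top}
  | .bot => {ELIU.bot}
  | .cn c => {ELIU.cn c}
  | .inter X Y => {Z | ∃ X' ∈ fDisj X, ∃ Y' ∈ fDisj Y, Z = ELIU.inter X' Y'}
  | .union X Y => fDisj X ∪ fDisj Y
  | .exR ρ X => {Z | ∃ X' ∈ fDisj X, Z = ELIU.exR ρ X'}
  | .exU X => {Z | ∃ X' ∈ fDisj X, Z = ELIU.exU X'}

/-- The rewriting of `O` replacing each `C ⊑ D` by `{C' ⊑ D : C' ∈ f(C)}`. -/
def rewriteO {C R : Type} (O : Set (ELIU C R × ELIU C R)) :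
    Set (ELIU C R × ELIU C R) :=
  {p | ∃ q ∈ O, p.2 = q.2 ∧ p.1 ∈ fDisj q.1}

/-- `E_O`: all ontologies obtained by choosing, for each inclusion `C' ⊑ D` of
the rewriting, one inclusion `C' ⊑ D'` with `D' ∈ f(D)`. -/
def EO {C R : Type} (O : Set (ELIU C R × ELIU C R)) :
    Set (Set (ELIU C R × ELIU C R)) :=
  {Oh | ∃ g : ELIU C R × ELIU C R → ELIU C R,
      (∀ p ∈ rewriteO O, g p ∈ fDisj p.2) ∧
      Oh = {q | ∃ p ∈ rewriteO O, q = (p.1, g p)}}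

/-! ### Direct products -/

def prodInterp {C R : Type} {n : ℕ} {A : Fin n → Type}
    (I : ∀ i, Interp C R (A i)) : Interp C R (∀ i, A i) where
  cn c f := ∀ i, (I i).cn c (f i)
  rn r f g := ∀ i, (I i).rn r (f i) (g i)

/-! ### Concrete databases and queries for specific statements -/

/-- The grid CQ `q_m` of Statement 16, as its canonical database. -/
def gridDB {C R : Type} (m : ℕ) (r : R) (Aname : Fin m × Fin m → C) :
    Interp C R (Fin m × Fin m) where
  cn c p := c = Aname p
  rn ρ p q := ρ = r ∧ Even (p.1.1 + p.2.1) ∧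
    ((p.1.1 : ℤ) - (q.1.1 : ℤ)).natAbs + ((p.2.1 : ℤ) - (q.2.1 : ℤ)).natAbs = 1

/-- The 3-cycle database of Statement 19. -/
def cycleDB {C R : Type} (nA : Fin 3 → C) (r : R) : Interp C R (Fin 3) where
  cn c i := c = nA i
  rn ρ i j := ρ = r ∧ j = i + 1

/-- The ontology `{Aᵢ ⊓ Aⱼ ⊑ B : 1 ≤ i < j ≤ 3}` of Statement 19. -/
def cycleOnt {C R : Type} (nA : Fin 3 → C) (nB : C) : Set (ELIU C R × ELIU C R) :=
  {p | ∃ i j : Fin 3, i < j ∧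
    p = (ELIU.inter (ELIU.cn (nA i)) (ELIU.cn (nA j)), ELIU.cn nB)}

/-- The Boolean CQ `∃x B(x)` of Statement 19. -/
def existsB {C R : Type} (nB : C) : CQ C R 0 where
  V := Unit
  cnAtoms := {(nB, Sum.inr ())}
  rnAtoms := ∅

/-- The ontology `O = {∃r.⊤ ⊓ ∀r.A ⊑ B₁ ⊔ B₂}` of Statement 14. -/
def O14 {C R : Type} (a b1 b2 : C) (r : R) : Set (ALCI C R × ALCI C R) :=
  {(ALCI.inter (ALCI.exR (.inl r) ALCI.top) (ALCI.allR r (ALCI.cn a)),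
    ALCI.unionA (ALCI.cn b1) (ALCI.cn b2))}

/-- The ontology `O_n` of Statement 14. -/
def O14n {C R : Type} (a b1 x : C) (r : R) (n : ℕ) : Set (ALCI C R × ALCI C R) :=
  {(ALCI.exR (.inl r) (ALCI.cn a), ALCI.exPow r n (ALCI.cn x)),
   (ALCI.exR (.inl r) (ALCI.inter (ALCI.cn a) (ALCI.exPow r (n-1) (ALCI.cn x))),
    ALCI.cn b1)}


namespace Stmt3Aux

open SimpleGraph

variable {C R A V : Type} {D : Interp C R A} {S : Set A} {l k : ℕ}

lemma rep_of_mem_S {T : Set A} (v : LKSeq D S l k T) {a : A} (ha : a ∈ S) :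
    v.rep a = Sum.inl a := by
  cases v <;> simp [LKSeq.rep, ha]

variable {G : SimpleGraph V} {v0 : V}

noncomputable def seqOfWalk (Tb : V → Set A) (Ob : V → V → Set A)
    (hT : ∀ v, SeqOk D S k (Tb v))
    (hOS : ∀ u v, G.Adj u v → S ⊆ Ob u v)
    (hOT : ∀ u v, G.Adj u v → Ob u v ⊆ Tb v ∩ Tb u)
    (hOf : ∀ u v, G.Adj u v → (Ob u v \ S).Finite)
    (hOl : ∀ u v, G.Adj u v → (Ob u v \ S).ncard ≤ l) :
    {v : V} → G.Walk v v0 → LKSeq D S l k (Tb v)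
  | _, .nil => .first (Tb v0) (hT v0)
  | _, @SimpleGraph.Walk.cons _ _ v u _ adj w =>
      .step (seqOfWalk Tb Ob hT hOS hOT hOf hOl w) (Ob v u) (Tb v)
        (hOS v u adj) (hOT v u adj) (hOf v u adj) (hOl v u adj) (hT v)

lemma rep_seqOfWalk_cons (Tb : V → Set A) (Ob : V → V → Set A)
    (hT : ∀ v, SeqOk D S k (Tb v))
    (hOS : ∀ u v, G.Adj u v → S ⊆ Ob u v)
    (hOT : ∀ u v, G.Adj u v → Ob u v ⊆ Tb v ∩ Tb u)
    (hOf : ∀ u v, G.Adj u v → (Ob u v \ S).Finite)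
    (hOl : ∀ u v, G.Adj u v → (Ob u v \ S).ncard ≤ l)
    {v u : V} (adj : G.Adj v u) (w : G.Walk u v0) {a : A} (ha : a ∈ Ob v u) :
    (seqOfWalk Tb Ob hT hOS hOT hOf hOl (Walk.cons adj w)).rep a
      = (seqOfWalk Tb Ob hT hOS hOT hOf hOl w).rep a := by
  by_cases hs : a ∈ S
  · rw [rep_of_mem_S _ hs, rep_of_mem_S _ hs]
  · simp only [seqOfWalk, LKSeq.rep]
    rw [if_neg hs, if_pos ha]

lemma rep_agree (Tb : V → Set A) (Ob : V → V → Set A)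
    (hT : ∀ v, SeqOk D S k (Tb v))
    (hOS : ∀ u v, G.Adj u v → S ⊆ Ob u v)
    (hOT : ∀ u v, G.Adj u v → Ob u v ⊆ Tb v ∩ Tb u)
    (hOf : ∀ u v, G.Adj u v → (Ob u v \ S).Finite)
    (hOl : ∀ u v, G.Adj u v → (Ob u v \ S).ncard ≤ l)
    (hacyc : G.IsAcyclic) (P : ∀ v, G.Path v v0)
    {u v : V} (adj : G.Adj u v) {a : A}
    (ha1 : a ∈ Ob u v) (ha2 : a ∈ Ob v u) :
    (seqOfWalk Tb Ob hT hOS hOT hOf hOl ((P u) : G.Walk u v0)).rep a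
      = (seqOfWalk Tb Ob hT hOS hOT hOf hOl ((P v) : G.Walk v v0)).rep a := by
  by_cases hv : v ∈ ((P u) : G.Walk u v0).support
  · have htake : (((P u) : G.Walk u v0).takeUntil v hv) = Walk.cons adj .nil := by
      have hp1 : (((P u) : G.Walk u v0).takeUntil v hv).IsPath := (P u).2.takeUntil hv
      have hp2 : (Walk.cons adj (.nil : G.Walk v v)).IsPath := by
        refine Walk.IsPath.nil.cons ?_
        simp [adj.ne]
      exact congrArg Subtype.val (hacyc.path_unique ⟨_, hp1⟩ ⟨_, hp2⟩)
    have hdrop : (((P u) : G.Walk u v0).dropUntil v hv) = ((P v) : G.Walk v v0) :=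
      congrArg Subtype.val (hacyc.path_unique ⟨_, (P u).2.dropUntil hv⟩ (P v))
    have heq : ((P u) : G.Walk u v0) = Walk.cons adj ((P v) : G.Walk v v0) := by
      conv_lhs => rw [← Walk.take_spec ((P u) : G.Walk u v0) hv]
      rw [htake, hdrop, Walk.cons_append, Walk.nil_append]
    rw [heq, rep_seqOfWalk_cons Tb Ob hT hOS hOT hOf hOl adj _ ha1]
  · have hpath : (Walk.cons adj.symm ((P u) : G.Walk u v0)).IsPath := (P u).2.cons hv
    have heq : ((P v) : G.Walk v v0) = Walk.cons adj.symm ((P u) : G.Walk u v0) :=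
      congrArg Subtype.val (hacyc.path_unique (P v) ⟨_, hpath⟩)
    rw [heq, rep_seqOfWalk_cons Tb Ob hT hOS hOT hOf hOl adj.symm _ ha2]

end Stmt3Aux

/-- homomorphisms from pointed databases of treewidth `(ℓ,k)` into
`D` lift to the `(ℓ,k)`-unraveling of `D` up to `t`. -/
theorem stmt3 {C R A B : Type} (D : Interp C R A) (hfinD : D.FiniteFacts)
    {m : ℕ} (t : Fin m → A) (ht : ∀ i, t i ∈ D.adom)
    (l k : ℕ) (h1 : 1 ≤ l) (h2 : l < k)
    (D' : Interp C R B) (hfin' : D'.FiniteFacts) (bt : Fin m → B)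
    (htw : HasTW (D'.restrict {x | x ∉ Set.range bt}) l k)
    (h : Hom D' D) (hb : ∀ i, h.toFun (bt i) = t i) :
    ∃ g : Hom D' (unravelLK D (Set.range t) l k),
      ∀ i, g.toFun (bt i) = Sum.inl (t i) := by
  classical
  obtain ⟨td⟩ := htw
  set S : Set A := Set.range t with hSdef
  set Dr : Interp C R B := D'.restrict {x | x ∉ Set.range bt} with hDrdef
  have hSadom : S ⊆ D.adom := by rintro a ⟨i, rfl⟩; exact ht i
  have hadomD' : ∀ x, x ∈ D'.adom → h.toFun x ∈ D.adom := by
    rintro x (⟨c, hc⟩ | ⟨r, b, hr⟩ | ⟨r, b, hr⟩)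
    · exact Or.inl ⟨c, h.map_cn c x hc⟩
    · exact Or.inr (Or.inl ⟨r, h.toFun b, h.map_rn r x b hr⟩)
    · exact Or.inr (Or.inr ⟨r, h.toFun b, h.map_rn r b x hr⟩)
  have hAdsub : Dr.adom ⊆ D'.adom := by
    rintro x (⟨c, hc⟩ | ⟨r, b, hr⟩ | ⟨r, b, hr⟩)
    · exact Or.inl ⟨c, hc.2⟩
    · exact Or.inr (Or.inl ⟨r, b, hr.2.2⟩)
    · exact Or.inr (Or.inr ⟨r, b, hr.2.2⟩)
  set bag' : td.V → Set B := fun v => td.bag v ∩ Dr.adom with hbag'def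
  have hbag'fin : ∀ v, (bag' v).Finite :=
    fun v => (td.bagFin v).subset Set.inter_subset_left
  set Tb : td.V → Set A := fun v => S ∪ h.toFun '' (bag' v) with hTbdef
  set Ob : td.V → td.V → Set A :=
    fun u v => S ∪ h.toFun '' (bag' u ∩ bag' v) with hObdef
  have himsub : ∀ v, h.toFun '' (bag' v) ⊆ D.adom := by
    rintro v a ⟨x, hx, rfl⟩
    exact hadomD' x (hAdsub hx.2)
  have hTdiff : ∀ v, Tb v \ S ⊆ h.toFun '' (bag' v) := by
    intro v a ha
    rcases ha.1 with h1 | h1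
    · exact absurd h1 ha.2
    · exact h1
  have hT : ∀ v, SeqOk D S k (Tb v) := by
    intro v
    refine ⟨Set.subset_union_left, Set.union_subset hSadom (himsub v), ?_, ?_⟩
    · exact ((hbag'fin v).image _).subset (hTdiff v)
    · calc (Tb v \ S).ncard ≤ (h.toFun '' (bag' v)).ncard :=
            Set.ncard_le_ncard (hTdiff v) ((hbag'fin v).image _)
        _ ≤ (bag' v).ncard := Set.ncard_image_le (hbag'fin v)
        _ ≤ (td.bag v).ncard := Set.ncard_le_ncard Set.inter_subset_left (td.bagFin v)
        _ ≤ k := td.bagCard v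
  have hOS : ∀ u v, td.G.Adj u v → S ⊆ Ob u v := fun u v _ => Set.subset_union_left
  have hOT : ∀ u v, td.G.Adj u v → Ob u v ⊆ Tb v ∩ Tb u := by
    intro u v _
    refine Set.union_subset (Set.subset_inter ?_ ?_) (Set.subset_inter ?_ ?_)
    · exact Set.subset_union_left
    · exact Set.subset_union_left
    · exact (Set.image_mono Set.inter_subset_right).trans Set.subset_union_right
    · exact (Set.image_mono Set.inter_subset_left).trans Set.subset_union_right
  have hObfin : ∀ u v, (h.toFun '' (bag' u ∩ bag' v)).Finite :=
    fun u v => ((hbag'fin u).subset Set.inter_subset_left).image _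
  have hOdiff : ∀ u v, Ob u v \ S ⊆ h.toFun '' (bag' u ∩ bag' v) := by
    intro u v a ha; rcases ha.1 with h1 | h1
    · exact absurd h1 ha.2
    · exact h1
  have hOf : ∀ u v, td.G.Adj u v → (Ob u v \ S).Finite :=
    fun u v _ => (hObfin u v).subset (hOdiff u v)
  have hOl : ∀ u v, td.G.Adj u v → (Ob u v \ S).ncard ≤ l := by
    intro u v hadj
    calc (Ob u v \ S).ncard ≤ (h.toFun '' (bag' u ∩ bag' v)).ncard :=
          Set.ncard_le_ncard (hOdiff u v) (hObfin u v)
      _ ≤ (bag' u ∩ bag' v).ncard :=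
          Set.ncard_image_le ((hbag'fin u).subset Set.inter_subset_left)
      _ ≤ (td.bag u ∩ td.bag v).ncard := by
          refine Set.ncard_le_ncard ?_ ((td.bagFin u).subset Set.inter_subset_left)
          exact Set.inter_subset_inter Set.inter_subset_left Set.inter_subset_left
      _ ≤ l := td.overlap u v hadj.ne
  obtain ⟨v0⟩ := td.conn.nonempty
  let P : ∀ v : td.V, td.G.Path v v0 :=
    fun v => (td.conn.preconnected v v0).some.toPath
  let seq : ∀ v : td.V, LKSeq D S l k (Tb v) :=
    fun v => Stmt3Aux.seqOfWalk Tb Ob hT hOS hOT hOf hOl ((P v) : td.G.Walk v v0)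
  have hObmem : ∀ (x : B) (u v : td.V), x ∈ bag' u → x ∈ bag' v →
      h.toFun x ∈ Ob u v := fun x u v hu hv => Or.inr ⟨x, ⟨hu, hv⟩, rfl⟩
  have hadjagree : ∀ (u v : td.V), td.G.Adj u v → ∀ x : B,
      x ∈ bag' u → x ∈ bag' v →
      (seq u).rep (h.toFun x) = (seq v).rep (h.toFun x) := by
    intro u v hadj x hu hv
    exact Stmt3Aux.rep_agree Tb Ob hT hOS hOT hOf hOl td.acyc P hadj
      (hObmem x u v hu hv) (hObmem x v u hv hu)
  have hchain : ∀ x ∈ Dr.adom, ∀ u v : td.V, x ∈ bag' u → x ∈ bag' v →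
      (seq u).rep (h.toFun x) = (seq v).rep (h.toFun x) := by
    intro x hx u v hu hv
    have hconn := td.cover x hx
    obtain ⟨p⟩ := hconn ⟨u, hu.1⟩ ⟨v, hv.1⟩
    have key : ∀ (a b : {w : td.V // x ∈ td.bag w})
        (q : (td.G.induce {w : td.V | x ∈ td.bag w}).Walk a b),
        (seq a.1).rep (h.toFun x) = (seq b.1).rep (h.toFun x) := by
      intro a b q
      induction q with
      | nil => rfl
      | @cons a c b hadj q ih =>
        refine .trans ?_ ih
        exact hadjagree a.1 c.1 hadj x ⟨a.2, hx⟩ ⟨c.2, hx⟩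
    exact key ⟨u, hu.1⟩ ⟨v, hv.1⟩ p
  -- single-element sequences
  have hsing : ∀ a : A, SeqOk D S k (S ∪ ({a} ∩ D.adom)) := by
    intro a
    refine ⟨Set.subset_union_left,
      Set.union_subset hSadom Set.inter_subset_right, ?_, ?_⟩
    · refine (Set.finite_singleton a).subset ?_
      intro b hb; rcases hb.1 with h1 | h1
      · exact absurd h1 hb.2
      · exact h1.1
    · calc ((S ∪ ({a} ∩ D.adom)) \ S).ncard ≤ ({a} : Set A).ncard := by
            refine Set.ncard_le_ncard ?_ (Set.finite_singleton a)
            intro b hb; rcases hb.1 with h1 | h1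
            · exact absurd h1 hb.2
            · exact h1.1
        _ = 1 := Set.ncard_singleton a
        _ ≤ k := le_trans h1 (le_of_lt h2)
  let seq1 : ∀ a : A, LKSeq D S l k (S ∪ ({a} ∩ D.adom)) :=
    fun a => LKSeq.first _ (hsing a)
  have hAdnode : ∀ x, x ∈ Dr.adom → ∃ v, x ∈ bag' v := by
    intro x hx
    obtain ⟨⟨v, hv⟩⟩ := (td.cover x hx).nonempty
    exact ⟨v, hv, hx⟩
  obtain ⟨node, hnode⟩ : ∃ node : B → td.V, ∀ x (hx : x ∈ Dr.adom),
      x ∈ bag' (node x) := by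
    refine ⟨fun x => if hx : x ∈ Dr.adom then (hAdnode x hx).choose else v0, ?_⟩
    intro x hx
    simp only [dif_pos hx]
    exact (hAdnode x hx).choose_spec
  obtain ⟨g0, hg1, hg2, hg3⟩ : ∃ g0 : B → LKElem D S l k,
      (∀ x, h.toFun x ∈ S → g0 x = Sum.inl (h.toFun x)) ∧
      (∀ x, h.toFun x ∉ S → x ∈ Dr.adom →
        g0 x = (seq (node x)).rep (h.toFun x)) ∧
      (∀ x, h.toFun x ∉ S → x ∉ Dr.adom →
        g0 x = (seq1 (h.toFun x)).rep (h.toFun x)) := by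
    refine ⟨fun x =>
      if h.toFun x ∈ S then Sum.inl (h.toFun x)
      else if x ∈ Dr.adom then (seq (node x)).rep (h.toFun x)
      else (seq1 (h.toFun x)).rep (h.toFun x), ?_, ?_, ?_⟩
    · intro x hx; simp only [if_pos hx]
    · intro x hx hx2; simp only [if_neg hx, if_pos hx2]
    · intro x hx hx2; simp only [if_neg hx, if_neg hx2]
  -- membership facts about restriction
  have hnbt : ∀ x : B, h.toFun x ∉ S → x ∉ Set.range bt := by
    rintro x hx ⟨i, rfl⟩
    exact hx ⟨i, (hb i).symm⟩
  refine ⟨⟨g0, ?_, ?_⟩, ?_⟩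
  · -- concept names
    intro c x hcx
    have hDc : D.cn c (h.toFun x) := h.map_cn c x hcx
    by_cases hxS : h.toFun x ∈ S
    · refine ⟨_, seq1 (h.toFun x), h.toFun x, Or.inl hxS, ?_, hDc⟩
      rw [hg1 x hxS, Stmt3Aux.rep_of_mem_S _ hxS]
    · by_cases hxA : x ∈ Dr.adom
      · exact ⟨Tb (node x), seq (node x), h.toFun x,
          Or.inr ⟨x, hnode x hxA, rfl⟩, hg2 x hxS hxA, hDc⟩
      · refine ⟨_, seq1 (h.toFun x), h.toFun x,
          Or.inr ⟨rfl, Or.inl ⟨c, hDc⟩⟩, hg3 x hxS hxA, hDc⟩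
  · -- role names
    intro r x y hxy
    have hDr : D.rn r (h.toFun x) (h.toFun y) := h.map_rn r x y hxy
    have hxadom : h.toFun x ∈ D.adom := Or.inr (Or.inl ⟨r, h.toFun y, hDr⟩)
    have hyadom : h.toFun y ∈ D.adom := Or.inr (Or.inr ⟨r, h.toFun x, hDr⟩)
    by_cases hxS : h.toFun x ∈ S
    · by_cases hyS : h.toFun y ∈ S
      · refine ⟨_, seq1 (h.toFun x), h.toFun x, h.toFun y,
          Or.inl hxS, Or.inl hyS, ?_, ?_, hDr⟩
        · rw [hg1 x hxS, Stmt3Aux.rep_of_mem_S _ hxS]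
        · rw [hg1 y hyS, Stmt3Aux.rep_of_mem_S _ hyS]
      · by_cases hyA : y ∈ Dr.adom
        · refine ⟨Tb (node y), seq (node y), h.toFun x, h.toFun y,
            Or.inl hxS, Or.inr ⟨y, hnode y hyA, rfl⟩, ?_, hg2 y hyS hyA, hDr⟩
          rw [hg1 x hxS, Stmt3Aux.rep_of_mem_S _ hxS]
        · refine ⟨_, seq1 (h.toFun y), h.toFun x, h.toFun y,
            Or.inl hxS, Or.inr ⟨rfl, hyadom⟩, ?_, hg3 y hyS hyA, hDr⟩
          rw [hg1 x hxS, Stmt3Aux.rep_of_mem_S _ hxS]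
    · by_cases hyS : h.toFun y ∈ S
      · by_cases hxA : x ∈ Dr.adom
        · refine ⟨Tb (node x), seq (node x), h.toFun x, h.toFun y,
            Or.inr ⟨x, hnode x hxA, rfl⟩, Or.inl hyS, hg2 x hxS hxA, ?_, hDr⟩
          rw [hg1 y hyS, Stmt3Aux.rep_of_mem_S _ hyS]
        · refine ⟨_, seq1 (h.toFun x), h.toFun x, h.toFun y,
            Or.inr ⟨rfl, hxadom⟩, Or.inl hyS, hg3 x hxS hxA, ?_, hDr⟩
          rw [hg1 y hyS, Stmt3Aux.rep_of_mem_S _ hyS]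
      · -- both outside S
        have hxbt : x ∉ Set.range bt := hnbt x hxS
        have hybt : y ∉ Set.range bt := hnbt y hyS
        have hDrxy : Dr.rn r x y := ⟨hxbt, hybt, hxy⟩
        have hxA : x ∈ Dr.adom := Or.inr (Or.inl ⟨r, y, hDrxy⟩)
        have hyA : y ∈ Dr.adom := Or.inr (Or.inr ⟨r, x, hDrxy⟩)
        obtain ⟨w, hwx, hwy⟩ := td.edges r x y hDrxy
        refine ⟨Tb w, seq w, h.toFun x, h.toFun y,
          Or.inr ⟨x, ⟨hwx, hxA⟩, rfl⟩, Or.inr ⟨y, ⟨hwy, hyA⟩, rfl⟩, ?_, ?_, hDr⟩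
        · rw [hg2 x hxS hxA]
          exact hchain x hxA (node x) w (hnode x hxA) ⟨hwx, hxA⟩
        · rw [hg2 y hyS hyA]
          exact hchain y hyA (node y) w (hnode y hyA) ⟨hwy, hyA⟩
  · intro i
    have hmem : h.toFun (bt i) ∈ S := ⟨i, (hb i).symm⟩
    show g0 (bt i) = Sum.inl (t i)
    rw [hg1 (bt i) hmem, hb i]
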